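/- Let A ⊆ ℝ^D be a cell with X-measure μ(A), and suppose each split of a cell is made along one of at most Dm candidate cut points, where each candidate cut in a given dimension is at an independent Uniform location within that dimension's extent of the cell (rescaled). If A' is a child of A produced by one split, then E[μ(A') | μ(A)] ≤ μ(A)·(2Dm+1)/(2Dm+2), assuming μ restricted to the cell is the uniform-like worst case where each child's measure fraction is bounded by the max over candidates of max(U_i, 1−U_i) with {U_i}_{i=1}^{Dm} i.i.d. Uniform[0,1]. Consequently, if A^K is any cell obtained from A by K successive splits, E[μ(A^K)] ≤ μ(A)·((2Dm+1)/(2Dm+2))^K. -/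

import Mathlib

open MeasureTheory ProbabilityTheory Set

lemma phi_integral (n : ℕ) (hn : 0 < n) :
    ∫ t in Set.Ioi (0:ℝ), (1 - (max (min t 1 - max (1-t) 0) 0)^n)
      = (2*(n:ℝ)+1)/(2*(n:ℝ)+2) := by
  set φ : ℝ → ℝ := fun t => 1 - (max (min t 1 - max (1-t) 0) 0)^n with hφ
  have hcont : Continuous φ := by
    apply Continuous.sub continuous_const
    exact ((((continuous_id.min continuous_const).sub
      ((continuous_const.sub continuous_id).max continuous_const)).max
      continuous_const).pow n)
  have hzero : ∀ t ∈ Set.Ioi (1:ℝ), φ t = 0 := by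
    intro t ht
    simp only [Set.mem_Ioi] at ht
    have h1 : min t 1 = 1 := min_eq_right ht.le
    have h2 : max (1-t) 0 = 0 := max_eq_right (by linarith)
    simp [hφ, h1, h2]
  have hone : ∀ t ∈ Set.Icc (0:ℝ) (1/2), φ t = 1 := by
    intro t ht
    obtain ⟨h0, h12⟩ := ht
    have h1 : min t 1 = t := min_eq_left (by linarith)
    have h2 : max (1-t) 0 = 1 - t := max_eq_left (by linarith)
    have h3 : max (t - (1 - t)) 0 = 0 := max_eq_right (by linarith)
    simp [hφ, h1, h2, h3, zero_pow hn.ne']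
  have hmid : ∀ t ∈ Set.Icc (1/2:ℝ) 1, φ t = 1 - (2*t-1)^n := by
    intro t ht
    obtain ⟨h0, h12⟩ := ht
    have h1 : min t 1 = t := min_eq_left h12
    have h2 : max (1-t) 0 = 1 - t := max_eq_left (by linarith)
    have h3 : max (t - (1 - t)) 0 = t - (1-t) := max_eq_left (by linarith)
    simp only [hφ]; rw [h1, h2, h3]; ring_nf
  -- split Ioi 0 into Ioc 0 1 and Ioi 1
  have hsplit : ∫ t in Set.Ioi (0:ℝ), φ t
      = (∫ t in Set.Ioc (0:ℝ) 1, φ t) + ∫ t in Set.Ioi (1:ℝ), φ t := by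
    rw [← setIntegral_union (Set.Ioc_disjoint_Ioi le_rfl) measurableSet_Ioi
      (hcont.integrableOn_Ioc) ?_, Set.Ioc_union_Ioi_eq_Ioi zero_le_one]
    exact (integrableOn_congr_fun hzero measurableSet_Ioi).mpr (integrableOn_zero)
  have htail : ∫ t in Set.Ioi (1:ℝ), φ t = 0 := by
    rw [setIntegral_congr_fun measurableSet_Ioi hzero]; simp
  have hIoc : ∫ t in Set.Ioc (0:ℝ) 1, φ t = ∫ t in (0:ℝ)..1, φ t :=
    (intervalIntegral.integral_of_le zero_le_one).symm
  have hadd : ∫ t in (0:ℝ)..1, φ t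
      = (∫ t in (0:ℝ)..(1/2:ℝ), φ t) + ∫ t in (1/2:ℝ)..1, φ t := by
    rw [intervalIntegral.integral_add_adjacent_intervals
      (hcont.intervalIntegrable _ _) (hcont.intervalIntegrable _ _)]
  have hI1 : ∫ t in (0:ℝ)..(1/2:ℝ), φ t = 1/2 := by
    rw [intervalIntegral.integral_congr (g := fun _ => (1:ℝ))
      (fun t ht => hone t (by rwa [Set.uIcc_of_le (by norm_num)] at ht))]
    simp
  have hI2 : ∫ t in (1/2:ℝ)..1, φ t = 1/2 - 1/(2*(n:ℝ)+2) := by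
    rw [intervalIntegral.integral_congr (g := fun t => 1 - (2*t-1)^n)
      (fun t ht => hmid t (by rwa [Set.uIcc_of_le (by norm_num)] at ht))]
    have hder : ∀ t ∈ Set.uIcc (1/2:ℝ) 1, HasDerivAt
        (fun t : ℝ => t - (2*t-1)^(n+1) / (2*((n:ℝ)+1))) (1 - (2*t-1)^n) t := by
      intro t _
      have h1 : HasDerivAt (fun t : ℝ => 2*t-1) 2 t := by
        simpa using ((hasDerivAt_id t).const_mul 2).sub_const 1
      have h2 := (h1.pow (n+1)).div_const (2*((n:ℝ)+1))
      have h3 := (hasDerivAt_id t).sub h2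
      convert h3 using 1
      have : (n:ℝ) + 1 ≠ 0 := by positivity
      · rfl
      · rfl
      · rfl
      simp only [Nat.add_sub_cancel, Nat.cast_add, Nat.cast_one]
      field_simp
    rw [intervalIntegral.integral_eq_sub_of_hasDerivAt hder ?_]
    · norm_num
      have : (n:ℝ) + 1 ≠ 0 := by positivity
      field_simp
      ring
    · apply Continuous.intervalIntegrable
      exact continuous_const.sub (((continuous_const.mul continuous_id).sub
        continuous_const).pow n)
  rw [hsplit, htail, hIoc, hadd, hI1, hI2]
  have : (2*(n:ℝ)+2) ≠ 0 := by positivity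
  field_simp
  ring

lemma expW {Ω : Type*} [MeasureSpace Ω] [IsProbabilityMeasure (ℙ : Measure Ω)]
    (n : ℕ) (hn : 0 < n) (V : Fin n → Ω → ℝ) (hmeas : ∀ i, Measurable (V i))
    (hunif : ∀ i, Measure.map (V i) ℙ = volume.restrict (Set.Icc (0:ℝ) 1))
    (hprod : ∀ (T : Set ℝ), MeasurableSet T →
      (ℙ : Measure Ω) (⋂ i : Fin n, V i ⁻¹' T) = ∏ i : Fin n, (ℙ : Measure Ω) (V i ⁻¹' T))
    (Wf : Ω → ℝ)
    (hWf : ∀ ω, Wf ω = Finset.univ.sup' ⟨⟨0,hn⟩, Finset.mem_univ _⟩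
      fun i => max (V i ω) (1 - V i ω)) :
    Integrable Wf (ℙ : Measure Ω) ∧ ∫ ω : Ω, Wf ω ∂(ℙ : Measure Ω) = (2*(n:ℝ)+1)/(2*(n:ℝ)+2) := by
  have hne : (Finset.univ : Finset (Fin n)).Nonempty := ⟨⟨0,hn⟩, Finset.mem_univ _⟩
  -- measurability
  have hWeq : Wf = Finset.univ.sup' hne (fun i => fun ω => max (V i ω) (1 - V i ω)) := by
    funext ω; rw [hWf, Finset.sup'_apply]
  have hWmeas : Measurable Wf := by
    rw [hWeq]
    exact Finset.measurable_sup' hne fun i _ =>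
      (hmeas i).max (measurable_const.sub (hmeas i))
  -- nonnegativity (everywhere)
  have hmax_half : ∀ x : ℝ, (1/2:ℝ) ≤ max x (1-x) := by
    intro x
    have h1 := le_max_left x (1-x)
    have h2 := le_max_right x (1-x)
    linarith
  have hWnn : ∀ ω, 0 ≤ Wf ω := by
    intro ω
    rw [hWf ω]
    have h := Finset.le_sup' (f := fun i => max (V i ω) (1 - V i ω))
      (b := (⟨0,hn⟩ : Fin n)) (Finset.mem_univ _)
    have h2 := hmax_half (V (⟨0,hn⟩ : Fin n) ω)
    linarith
  -- a.e. bound by 1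
  have hae1 : ∀ᵐ ω ∂(ℙ : Measure Ω), Wf ω ≤ 1 := by
    have hai : ∀ i, ∀ᵐ ω ∂(ℙ : Measure Ω), V i ω ∈ Set.Icc (0:ℝ) 1 := by
      intro i
      have hpre : MeasurableSet (V i ⁻¹' Set.Icc (0:ℝ) 1) := (hmeas i) measurableSet_Icc
      have h1 : (ℙ : Measure Ω) (V i ⁻¹' Set.Icc (0:ℝ) 1) = 1 := by
        rw [← Measure.map_apply (hmeas i) measurableSet_Icc, hunif i,
          Measure.restrict_apply measurableSet_Icc, Set.inter_self, Real.volume_Icc]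
        norm_num
      have : (ℙ : Measure Ω) (V i ⁻¹' Set.Icc (0:ℝ) 1)ᶜ = 0 := by
        rw [prob_compl_eq_one_sub hpre, h1, tsub_self]
      filter_upwards [measure_eq_zero_iff_ae_notMem.mp this] with ω hω
      simpa using hω
    filter_upwards [(MeasureTheory.ae_all_iff).mpr hai] with ω hω
    rw [hWf ω]
    apply Finset.sup'_le
    intro i _
    have := hω i
    simp only [Set.mem_Icc] at this
    exact max_le (by linarith [this.2]) (by linarith [this.1])
  have hint : Integrable Wf (ℙ : Measure Ω) := by
    refine Integrable.mono' (integrable_const 1) hWmeas.aestronglyMeasurable ?_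
    filter_upwards [hae1] with ω hω
    rw [Real.norm_eq_abs, abs_of_nonneg (hWnn ω)]
    exact hω
  refine ⟨hint, ?_⟩
  -- tail probability formula
  have htail : ∀ t : ℝ, ((ℙ : Measure Ω) {ω | t < Wf ω}).toReal
      = 1 - (max (min t 1 - max (1-t) 0) 0)^n := by
    intro t
    have hset : {ω | Wf ω ≤ t} = ⋂ i, V i ⁻¹' Set.Icc (1-t) t := by
      ext ω
      simp only [Set.mem_setOf_eq, hWf, Finset.sup'_le_iff, Finset.mem_univ,
        forall_true_left, Set.mem_iInter, Set.mem_preimage, Set.mem_Icc, max_le_iff]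
      constructor
      · intro h i; obtain ⟨h1, h2⟩ := max_le_iff.mp ((Finset.le_sup' (fun i => max (V i ω) (1 - V i ω)) (Finset.mem_univ i)).trans h); exact ⟨by linarith, h1⟩
      · intro h; apply Finset.sup'_le; intro i _; obtain ⟨h1, h2⟩ := h i; exact max_le h2 (by linarith)
    have hmarg : ∀ i, (ℙ : Measure Ω) (V i ⁻¹' Set.Icc (1-t) t)
        = ENNReal.ofReal (min t 1 - max (1-t) 0) := by
      intro i
      rw [← Measure.map_apply (hmeas i) measurableSet_Icc, hunif i,
        Measure.restrict_apply measurableSet_Icc, Set.Icc_inter_Icc, Real.volume_Icc]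
    have hmeas_le : MeasurableSet {ω | Wf ω ≤ t} := hWmeas measurableSet_Iic
    have hcompl : {ω | t < Wf ω} = {ω | Wf ω ≤ t}ᶜ := by
      ext ω; simp [not_le]
    have hle : (ℙ : Measure Ω) {ω | Wf ω ≤ t} = (ENNReal.ofReal (min t 1 - max (1-t) 0))^n := by
      rw [hset, hprod _ measurableSet_Icc]
      simp [hmarg, Finset.prod_const]
    have hle1 : (ENNReal.ofReal (min t 1 - max (1-t) 0))^n ≤ 1 := by
      apply pow_le_one' (ENNReal.ofReal_le_one.mpr ?_)
      have := le_max_right (1-t) (0:ℝ)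
      have := min_le_right t (1:ℝ)
      linarith
    rw [hcompl, prob_compl_eq_one_sub hmeas_le, hle,
      ENNReal.toReal_sub_of_le hle1 ENNReal.one_ne_top]
    rw [ENNReal.toReal_pow, ENNReal.toReal_ofReal', ENNReal.toReal_one]
  rw [hint.integral_eq_integral_meas_lt (Filter.Eventually.of_forall hWnn)]
  simp_rw [measureReal_def]
  rw [setIntegral_congr_fun measurableSet_Ioi (fun t _ => htail t)]
  exact phi_integral n hn

/-- Let `M K` be the measure of the cell obtained from `A` after `K`
splits (`M 0 = μ(A)`).  Each split retains at most the fraction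
`W K = max_{i < Dm} max(U_i, 1 − U_i)` of the mass, where the `U`'s are i.i.d.
Uniform[0,1] and `W K` is independent of `M K`.  Then
`E[M K] ≤ μ(A) · ((2Dm+1)/(2Dm+2))^K`. -/
theorem stmt14 {Ω : Type*} [MeasureSpace Ω] [IsProbabilityMeasure (ℙ : Measure Ω)]
    (D m : ℕ) (hDm : 0 < D * m) (μA : ℝ) (hμA : 0 ≤ μA)
    (U : ℕ → Fin (D * m) → Ω → ℝ) (hUmeas : ∀ K i, Measurable (U K i))
    (hunif : ∀ K i, Measure.map (U K i) ℙ = volume.restrict (Set.Icc (0 : ℝ) 1))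
    (hUindep : iIndepFun
      (fun p : ℕ × Fin (D * m) => U p.1 p.2) ℙ)
    (M : ℕ → Ω → ℝ) (hM0 : ∀ ω, M 0 ω = μA) (hMpos : ∀ K ω, 0 ≤ M K ω)
    (hMmeas : ∀ K, Measurable (M K)) (hMint : ∀ K, Integrable (M K) ℙ)
    (W : ℕ → Ω → ℝ)
    (hW : ∀ K ω, W K ω = Finset.univ.sup' ⟨⟨0, hDm⟩, Finset.mem_univ _⟩
      fun i => max (U K i ω) (1 - U K i ω))
    (hindepMW : ∀ K, IndepFun (M K) (W K) ℙ)
    (hMWint : ∀ K, Integrable (fun ω => M K ω * W K ω) ℙ)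
    (hstep : ∀ K ω, M (K + 1) ω ≤ M K ω * W K ω)
    (K : ℕ) :
    ∫ ω, M K ω ∂ℙ ≤ μA * ((2 * (D * m : ℝ) + 1) / (2 * (D * m : ℝ) + 2)) ^ K := by
  set r : ℝ := (2 * (D * m : ℝ) + 1) / (2 * (D * m : ℝ) + 2) with hr
  have hrnn : 0 ≤ r := by positivity
  have hWfacts : ∀ k, Integrable (W k) (ℙ : Measure Ω) ∧ ∫ ω : Ω, W k ω ∂ℙ = r := by
    intro k
    have hprod : ∀ (T : Set ℝ), MeasurableSet T →
        (ℙ : Measure Ω) (⋂ i : Fin (D*m), (U k i) ⁻¹' T)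
          = ∏ i : Fin (D*m), (ℙ : Measure Ω) ((U k i) ⁻¹' T) := by
      intro T hT
      have hinj : Function.Injective (fun i : Fin (D*m) => (k, i)) := by
        intro a b hab; simpa using hab
      have h := hUindep.meas_biInter (S := Finset.univ.image fun i : Fin (D*m) => (k, i))
        (s := fun p => U p.1 p.2 ⁻¹' T) (fun p _ => ⟨T, hT, rfl⟩)
      rw [Finset.set_biInter_finset_image, Finset.prod_image (fun a _ b _ h => hinj h)] at h
      simpa using h
    have := expW (D*m) hDm (fun i => U k i) (hUmeas k) (hunif k) hprod (W k) (hW k)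
    push_cast at this ⊢
    exact this
  induction K with
  | zero =>
    simp only [pow_zero, mul_one]
    rw [show (fun ω => M 0 ω) = fun _ : Ω => μA from funext hM0]
    simp
  | succ K ih =>
    have h1 : ∫ ω, M (K+1) ω ∂ℙ ≤ ∫ ω, M K ω * W K ω ∂ℙ :=
      integral_mono (hMint (K+1)) (hMWint K) (hstep K)
    have h2 : ∫ ω, M K ω * W K ω ∂ℙ = (∫ ω, M K ω ∂ℙ) * ∫ ω, W K ω ∂ℙ :=
      (hindepMW K).integral_mul_eq_mul_integral (hMint K).aestronglyMeasurable (hWfacts K).1.aestronglyMeasurable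
    have h3 := (hWfacts K).2
    calc ∫ ω, M (K+1) ω ∂ℙ ≤ (∫ ω, M K ω ∂ℙ) * r := by rw [← h3, ← h2]; exact h1
    _ ≤ (μA * r ^ K) * r := mul_le_mul_of_nonneg_right ih hrnn
    _ = μA * r ^ (K+1) := by ring
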